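/- Let λ be the uniform (normalized Lebesgue) probability measure on the interval [0, 2π] and for w ∈ ℝ let C_w = {x ∈ ℝ : cos(wx) ≥ 0}. Then for all integers 0 ≤ j < k, λ(C_{2^j} Δ C_{2^k}) = 1/2. In particular, the concepts C_{2^k}, k = 0, 1, 2, …, form an infinite family whose members are pairwise at L¹(λ)-distance exactly 1/2. -/

import Mathlib

open MeasureTheory

/-- The uniform (normalized Lebesgue) probability measure on `[0, 2π]`. -/
noncomputable def unifTwoPi : Measure ℝ :=
  (ENNReal.ofReal (2 * Real.pi))⁻¹ • (volume.restrict (Set.Icc (0 : ℝ) (2 * Real.pi)))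

open Real Set

/-- Shift lemma: a 2π-periodic measurable set has the same measure on `[t, 2π+t)` as on `[0, 2π)`. -/
lemma shift_per (P : Set ℝ) (hP : MeasurableSet P)
    (hper : ∀ x, x + 2 * π ∈ P ↔ x ∈ P) (t : ℝ) (ht0 : 0 ≤ t) (ht2 : t ≤ 2 * π) :
    volume (P ∩ Ico t (2 * π + t)) = volume (P ∩ Ico 0 (2 * π)) := by
  have hdis : ∀ (u v w : ℝ) (Q : Set ℝ), Disjoint (Q ∩ Ico u v) (Q ∩ Ico v w) := by
    intro u v w Q
    apply Set.disjoint_left.mpr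
    rintro x ⟨_, _, h1⟩ ⟨_, h2, _⟩
    exact absurd h2 (not_le.mpr h1)
  have key : volume (P ∩ Ico (2 * π) (2 * π + t)) = volume (P ∩ Ico 0 t) := by
    have hpre : (fun x => x + 2 * π) ⁻¹' (P ∩ Ico (2 * π) (2 * π + t)) = P ∩ Ico 0 t := by
      ext x
      simp only [Set.mem_preimage, Set.mem_inter_iff, Set.mem_Ico, hper x]
      constructor
      · rintro ⟨h1, h2, h3⟩; exact ⟨h1, by linarith, by linarith⟩
      · rintro ⟨h1, h2, h3⟩; exact ⟨h1, by linarith, by linarith⟩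
    rw [← hpre, measure_preimage_add_right]
  have h1 : Ico (0 : ℝ) (2 * π) = Ico 0 t ∪ Ico t (2 * π) :=
    (Set.Ico_union_Ico_eq_Ico ht0 ht2).symm
  have h2 : Ico t (2 * π + t) = Ico t (2 * π) ∪ Ico (2 * π) (2 * π + t) :=
    (Set.Ico_union_Ico_eq_Ico ht2 (by linarith)).symm
  rw [h1, h2, Set.inter_union_distrib_left, Set.inter_union_distrib_left,
    measure_union (hdis t (2*π) (2*π+t) P) (hP.inter measurableSet_Ico),
    measure_union (hdis 0 t (2*π) P) (hP.inter measurableSet_Ico), key]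
  ring

set_option maxHeartbeats 1000000 in
/-- under the uniform probability measure on `[0, 2π]`, the concepts
`C_{2^j} = {x | cos (2^j x) ≥ 0}` are pairwise at `L¹`-distance exactly `1/2`:
for `0 ≤ j < k`, `λ (C_{2^j} Δ C_{2^k}) = 1/2`. -/
theorem stmt9 (j k : ℕ) (hjk : j < k) :
    unifTwoPi (symmDiff {x : ℝ | 0 ≤ Real.cos ((2 : ℝ) ^ j * x)}
      {x : ℝ | 0 ≤ Real.cos ((2 : ℝ) ^ k * x)}) = 1 / 2 := by
  have hπ : 0 < π := Real.pi_pos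
  set a : ℝ := 2 ^ j with ha
  set b : ℝ := 2 ^ k with hb
  set t : ℝ := π / 2 ^ j with ht
  have ha0 : (0:ℝ) < a := by positivity
  have hat : a * t = π := by rw [ht, ha]; field_simp
  have hbt : b * t = (2 ^ (k - j - 1) : ℤ) * (2 * π) := by
    rw [hb, ht, show k = (k - j - 1) + 1 + j by omega, show (k - j - 1) + 1 + j - j - 1 = k - j - 1 by omega]
    push_cast
    rw [pow_add, pow_add]
    field_simp
  have ht0 : 0 ≤ t := by positivity
  have ht2 : t ≤ 2 * π := by
    have h1 : (1:ℝ) ≤ 2 ^ j := one_le_pow₀ (by norm_num : (1:ℝ) ≤ 2)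
    have h2 : t ≤ π := by rw [ht]; exact div_le_self hπ.le h1
    linarith
  set A : Set ℝ := {x : ℝ | 0 ≤ Real.cos (a * x)} with hA
  set B : Set ℝ := {x : ℝ | 0 ≤ Real.cos (b * x)} with hB
  rw [show symmDiff A B = (A \ B) ∪ (B \ A) from Set.symmDiff_def A B]
  set S : Set ℝ := (A \ B) ∪ (B \ A) with hS
  have hAm : MeasurableSet A :=
    measurableSet_le measurable_const (Real.continuous_cos.comp (continuous_const.mul continuous_id)).measurable
  have hBm : MeasurableSet B :=
    measurableSet_le measurable_const (Real.continuous_cos.comp (continuous_const.mul continuous_id)).measurable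
  have hSm : MeasurableSet S := ((hAm.diff hBm).union (hBm.diff hAm))
  -- periodicity
  have hcosa : ∀ x : ℝ, Real.cos (a * (x + 2 * π)) = Real.cos (a * x) := by
    intro x
    have : a * (x + 2 * π) = a * x + (2 ^ j : ℤ) * (2 * π) := by push_cast [ha]; ring
    rw [this, Real.cos_add_int_mul_two_pi]
  have hcosb : ∀ x : ℝ, Real.cos (b * (x + 2 * π)) = Real.cos (b * x) := by
    intro x
    have : b * (x + 2 * π) = b * x + (2 ^ k : ℤ) * (2 * π) := by push_cast [hb]; ring
    rw [this, Real.cos_add_int_mul_two_pi]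
  have hSper : ∀ x, x + 2 * π ∈ S ↔ x ∈ S := by
    intro x
    simp only [hS, Set.mem_union, Set.mem_diff, hA, hB, Set.mem_setOf_eq, hcosa, hcosb]
  -- the null set
  set N : Set ℝ := {x : ℝ | Real.cos (a * x) = 0} with hNdef
  have hN : volume N = 0 := by
    have hc : N.Countable := by
      apply (Set.countable_range (fun n : ℤ => ((2 * (n:ℝ) + 1) * π / 2) / a)).mono
      intro x hx
      obtain ⟨n, hn⟩ := Real.cos_eq_zero_iff.mp hx
      exact ⟨n, by field_simp; linarith⟩
    exact hc.measure_zero _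
  -- flip property
  have hflip : ∀ x ∉ N, (x + t ∈ S ↔ x ∉ S) := by
    intro x hx
    have h1 : Real.cos (a * (x + t)) = -Real.cos (a * x) := by
      rw [mul_add, hat, Real.cos_add_pi]
    have h2 : Real.cos (b * (x + t)) = Real.cos (b * x) := by
      rw [mul_add, hbt, Real.cos_add_int_mul_two_pi]
    have hc : Real.cos (a * x) ≠ 0 := hx
    have h1' : (0 ≤ Real.cos (a * (x + t))) ↔ ¬ (0 ≤ Real.cos (a * x)) := by
      rw [h1, neg_nonneg, not_le]
      constructor
      · intro h; exact lt_of_le_of_ne h hc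
      · exact le_of_lt
    simp only [hS, Set.mem_union, Set.mem_diff, hA, hB, Set.mem_setOf_eq, h1', h2]
    by_cases hP : (0 ≤ Real.cos (a * x)) <;> by_cases hQ : (0 ≤ Real.cos (b * x)) <;>
      simp [hP, hQ]
  -- a.e. equality: (· + t) ⁻¹' Sᶜ =ᵐ S
  set V := volume (S ∩ Ico 0 (2 * π)) with hV
  have e1 : volume (Sᶜ ∩ Ico t (2 * π + t)) = V := by
    have hpre : (fun x => x + t) ⁻¹' (Sᶜ ∩ Ico t (2 * π + t)) =
        ((fun x => x + t) ⁻¹' Sᶜ) ∩ Ico 0 (2 * π) := by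
      ext x
      simp only [Set.mem_preimage, Set.mem_inter_iff, Set.mem_Ico]
      constructor
      · rintro ⟨h1, h2, h3⟩; exact ⟨h1, by linarith, by linarith⟩
      · rintro ⟨h1, h2, h3⟩; exact ⟨h1, by linarith, by linarith⟩
    rw [← measure_preimage_add_right volume t _, hpre]
    apply measure_congr
    have hae : ∀ᵐ x, x ∉ N := (MeasureTheory.measure_eq_zero_iff_ae_notMem).mp hN
    filter_upwards [hae] with x hx
    have := hflip x hx
    simp only [eq_iff_iff, Set.mem_inter_iff, Set.mem_preimage, Set.mem_compl_iff]
    constructor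
    · rintro ⟨h1, h2⟩
      refine ⟨?_, h2⟩
      by_contra hxS
      exact h1 (this.mpr hxS)
    · rintro ⟨h1, h2⟩
      exact ⟨fun h => (this.mp h) h1, h2⟩
  have e2 : volume (Sᶜ ∩ Ico t (2 * π + t)) = volume (Sᶜ ∩ Ico 0 (2 * π)) := by
    apply shift_per _ hSm.compl _ t ht0 ht2
    intro x
    simp only [Set.mem_compl_iff, hSper x]
  have e3 : V + volume (Sᶜ ∩ Ico 0 (2 * π)) = ENNReal.ofReal (2 * π) := by
    have h := measure_inter_add_diff (μ := volume) (Ico (0:ℝ) (2 * π)) hSm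
    rw [Set.diff_eq, Set.inter_comm _ S, Set.inter_comm _ Sᶜ] at h
    rw [hV, h, Real.volume_Ico, sub_zero]
  have hVπ : V = ENNReal.ofReal π := by
    have h2V : V + V = ENNReal.ofReal π + ENNReal.ofReal π := calc
      V + V = V + volume (Sᶜ ∩ Ico 0 (2 * π)) := by rw [← e2, e1]
      _ = ENNReal.ofReal (2 * π) := e3
      _ = ENNReal.ofReal π + ENNReal.ofReal π := by
          rw [← ENNReal.ofReal_add hπ.le hπ.le]; congr 1; ring
    have : 2 * V = 2 * ENNReal.ofReal π := by
      rw [two_mul, two_mul, h2V]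
    exact (ENNReal.mul_right_inj (by norm_num) (by norm_num)).mp this
  -- finish
  have hicc : volume (S ∩ Icc 0 (2 * π)) = V := by
    rw [hV, ← Set.Ico_union_right (by positivity : (0:ℝ) ≤ 2 * π), Set.inter_union_distrib_left]
    refine le_antisymm ?_ (measure_mono Set.subset_union_left)
    calc volume (S ∩ Ico 0 (2*π) ∪ S ∩ {2*π})
        ≤ volume (S ∩ Ico 0 (2*π)) + volume (S ∩ {2*π}) := measure_union_le _ _
      _ = volume (S ∩ Ico 0 (2*π)) := by
          rw [measure_mono_null Set.inter_subset_right Real.volume_singleton, add_zero]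
  show ((ENNReal.ofReal (2 * Real.pi))⁻¹ •
    (volume.restrict (Set.Icc (0 : ℝ) (2 * Real.pi)))) S = 1 / 2
  rw [Measure.smul_apply, Measure.restrict_apply hSm, smul_eq_mul, hicc, hVπ]
  rw [ENNReal.ofReal_mul (by norm_num : (0:ℝ) ≤ 2)]
  rw [ENNReal.mul_inv (by simp) (by left; exact ENNReal.ofReal_ne_top)]
  rw [mul_assoc, ENNReal.inv_mul_cancel (by simp [hπ]) ENNReal.ofReal_ne_top, mul_one]
  rw [ENNReal.ofReal_ofNat, one_div]
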